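/- The restriction of F(b) = φ(b)/Φ(−b) − b to the interval (0, ∞) is a continuous bijection from (0, ∞) onto the open interval (0, 2/√(2π)). -/

import Mathlib

open MeasureTheory Filter
open scoped Topology

/-- Standard normal density. -/
noncomputable def phi (x : ℝ) : ℝ := Real.exp (-x ^ 2 / 2) / Real.sqrt (2 * Real.pi)

/-- Standard normal cumulative distribution function. -/
noncomputable def Phi (x : ℝ) : ℝ := ∫ t in Set.Iio x, phi t

lemma sqrt2pi_pos : 0 < Real.sqrt (2 * Real.pi) :=
  Real.sqrt_pos.2 (by positivity)

lemma phi_pos (x : ℝ) : 0 < phi x := div_pos (Real.exp_pos _) sqrt2pi_pos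

lemma phi_eq (x : ℝ) : phi x = Real.exp (-(1/2) * x ^ 2) / Real.sqrt (2 * Real.pi) := by
  rw [phi]; ring_nf

lemma continuous_phi : Continuous phi := by
  unfold phi
  fun_prop

lemma integrable_phi : Integrable phi := by
  have := (integrable_exp_neg_mul_sq (by norm_num : (0:ℝ) < 1/2)).mul_const
    (Real.sqrt (2 * Real.pi))⁻¹
  apply this.congr
  filter_upwards with x
  rw [phi_eq]; ring

lemma integral_phi : ∫ x, phi x = 1 := by
  simp_rw [phi_eq, div_eq_mul_inv]
  rw [integral_mul_const, integral_gaussian]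
  rw [show Real.pi / (1 * 2⁻¹) = 2 * Real.pi by ring]
  exact mul_inv_cancel₀ (ne_of_gt sqrt2pi_pos)

lemma phi_neg (x : ℝ) : phi (-x) = phi x := by simp [phi]

lemma Phi_pos (x : ℝ) : 0 < Phi x := by
  rw [Phi]
  rw [setIntegral_pos_iff_support_of_nonneg_ae]
  · have : (Function.support phi) = Set.univ := by
      ext y; simp [Function.mem_support, (phi_pos y).ne']
    rw [this, Set.univ_inter]
    simp [Real.volume_Iio]
  · exact Filter.Eventually.of_forall (fun y => (phi_pos y).le)
  · exact integrable_phi.integrableOn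

lemma Phi_eq_Iic (x : ℝ) : Phi x = ∫ t in Set.Iic x, phi t :=
  (integral_Iic_eq_integral_Iio).symm

lemma Phi_sub (a b : ℝ) : Phi b - Phi a = ∫ t in a..b, phi t := by
  rw [Phi_eq_Iic, Phi_eq_Iic,
    intervalIntegral.integral_Iic_sub_Iic integrable_phi.integrableOn
      integrable_phi.integrableOn]

lemma hasDerivAt_Phi (x : ℝ) : HasDerivAt Phi (phi x) x := by
  have h := intervalIntegral.integral_hasDerivAt_right
    (continuous_phi.intervalIntegrable 0 x)
    (continuous_phi.stronglyMeasurableAtFilter _ _)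
    continuous_phi.continuousAt
  have h2 := h.const_add (Phi 0)
  have : (fun u => Phi 0 + ∫ t in (0:ℝ)..u, phi t) = Phi := by
    funext u
    rw [← Phi_sub]; ring
  rwa [this] at h2

lemma continuous_Phi : Continuous Phi := by
  have : Differentiable ℝ Phi := fun x => (hasDerivAt_Phi x).differentiableAt
  exact this.continuous

lemma hasDerivAt_Phi_neg (b : ℝ) : HasDerivAt (fun x => Phi (-x)) (-(phi b)) b := by
  have := (hasDerivAt_Phi (-b)).comp b (hasDerivAt_neg b)
  simpa [phi_neg, Function.comp_def] using this

lemma Phi_neg_eq (b : ℝ) : Phi (-b) = ∫ t in Set.Ioi b, phi t := by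
  rw [Phi_eq_Iic, ← integral_comp_neg_Ioi]
  simp [phi_neg]

lemma Phi_add_Phi_neg (b : ℝ) : Phi b + Phi (-b) = 1 := by
  rw [Phi_eq_Iic, Phi_neg_eq, intervalIntegral.integral_Iic_add_Ioi integrable_phi.integrableOn
    integrable_phi.integrableOn, integral_phi]

lemma Phi_zero : Phi 0 = 1 / 2 := by
  have := Phi_add_Phi_neg 0
  rw [neg_zero] at this
  linarith

lemma phi_zero : phi 0 = 1 / Real.sqrt (2 * Real.pi) := by simp [phi]

lemma hasDerivAt_phi (x : ℝ) : HasDerivAt phi (-x * phi x) x := by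
  have h1 : HasDerivAt (fun x : ℝ => -x ^ 2 / 2) (-x) x := by
    have := ((hasDerivAt_pow 2 x).neg.div_const 2)
    refine this.congr_deriv ?_
    simp; ring
  have h2 := (h1.exp).div_const (Real.sqrt (2 * Real.pi))
  refine h2.congr_deriv ?_
  unfold phi; ring

lemma integrable_mul_phi : Integrable (fun t => t * phi t) := by
  have := (integrable_mul_exp_neg_mul_sq (by norm_num : (0:ℝ) < 1/2)).mul_const
    (Real.sqrt (2 * Real.pi))⁻¹
  apply this.congr
  filter_upwards with x
  rw [phi_eq]; ring

lemma tendsto_phi_atTop : Tendsto phi atTop (𝓝 0) := by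
  have h1 : Tendsto (fun x : ℝ => x ^ 2 / 2) atTop atTop :=
    (tendsto_pow_atTop two_ne_zero).atTop_div_const (by norm_num)
  have h2 : Tendsto (fun x : ℝ => Real.exp (-x ^ 2 / 2)) atTop (𝓝 0) := by
    have := Real.tendsto_exp_atBot.comp (tendsto_neg_atTop_atBot.comp h1)
    apply this.congr
    intro x; simp [Function.comp]; ring_nf
  have := h2.div_const (Real.sqrt (2 * Real.pi))
  rw [zero_div] at this
  exact this

lemma tendsto_mul_phi_atTop : Tendsto (fun b => b * phi b) atTop (𝓝 0) := by
  have hb : Tendsto (fun x : ℝ => x ^ (1:ℝ) * Real.exp (-1 * x) / Real.sqrt (2 * Real.pi))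
      atTop (𝓝 0) := by
    simpa using (tendsto_rpow_mul_exp_neg_mul_atTop_nhds_zero 1 1 one_pos).div_const
      (Real.sqrt (2 * Real.pi))
  apply tendsto_of_tendsto_of_tendsto_of_le_of_le' tendsto_const_nhds hb
  · filter_upwards [eventually_ge_atTop (0:ℝ)] with x hx
    exact mul_nonneg hx (phi_pos x).le
  · filter_upwards [eventually_ge_atTop (2:ℝ)] with x hx
    have h2 : -x ^ 2 / 2 ≤ -x := by nlinarith
    have : Real.exp (-x ^ 2 / 2) ≤ Real.exp (-x) := Real.exp_le_exp.2 h2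
    rw [Real.rpow_one]
    unfold phi
    rw [mul_div_assoc]
    have hx0 : (0:ℝ) ≤ x := by linarith
    apply mul_le_mul_of_nonneg_left _ hx0
    gcongr
    nlinarith

lemma integral_Ioi_mul_phi (b : ℝ) : ∫ t in Set.Ioi b, t * phi t = phi b := by
  have h := integral_Ioi_of_hasDerivAt_of_tendsto
    (f := fun t => -phi t) (f' := fun t => t * phi t) (a := b)
    (continuous_phi.neg.continuousWithinAt)
    (fun x _ => by have := (hasDerivAt_phi x).neg; simp only [neg_mul, neg_neg] at this; exact this)
    (integrable_mul_phi.integrableOn)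
    (by simpa using tendsto_phi_atTop.neg)
  simpa using h

lemma Phi_neg_le (b : ℝ) (hb : 0 < b) : Phi (-b) ≤ phi b / b := by
  rw [Phi_neg_eq]
  have hint : Integrable (fun t => (t / b) * phi t) := by
    have := integrable_mul_phi.div_const b
    apply this.congr
    filter_upwards with t; ring
  have h : ∫ t in Set.Ioi b, phi t ≤ ∫ t in Set.Ioi b, (t / b) * phi t := by
    apply setIntegral_mono_on
    · exact integrable_phi.integrableOn
    · exact hint.integrableOn
    · exact measurableSet_Ioi
    · intro t ht
      have htb : b ≤ t := le_of_lt ht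
      nth_rewrite 1 [← one_mul (phi t)]
      apply mul_le_mul_of_nonneg_right _ (phi_pos t).le
      rw [le_div_iff₀ hb]
      linarith
  calc ∫ t in Set.Ioi b, phi t ≤ ∫ t in Set.Ioi b, (t / b) * phi t := h
    _ = (∫ t in Set.Ioi b, t * phi t) / b := by
        rw [← integral_div]
        congr 1; funext t; ring
    _ = phi b / b := by rw [integral_Ioi_mul_phi]

lemma tendsto_Phi_neg : Tendsto (fun b => Phi (-b)) atTop (𝓝 0) := by
  apply tendsto_of_tendsto_of_tendsto_of_le_of_le' tendsto_const_nhds tendsto_phi_atTop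
  · filter_upwards with b using (Phi_pos (-b)).le
  · filter_upwards [eventually_ge_atTop (1:ℝ)] with b hb
    calc Phi (-b) ≤ phi b / b := Phi_neg_le b (by linarith)
      _ ≤ phi b / 1 := by
          exact div_le_div_of_nonneg_left (phi_pos b).le one_pos hb
      _ = phi b := div_one _

lemma tendsto_mul_Phi_neg : Tendsto (fun b => b * Phi (-b)) atTop (𝓝 0) := by
  apply tendsto_of_tendsto_of_tendsto_of_le_of_le' tendsto_const_nhds tendsto_phi_atTop
  · filter_upwards [eventually_ge_atTop (0:ℝ)] with b hb
    exact mul_nonneg hb (Phi_pos (-b)).le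
  · filter_upwards [eventually_ge_atTop (1:ℝ)] with b hb
    have h := Phi_neg_le b (by linarith)
    calc b * Phi (-b) ≤ b * (phi b / b) :=
          mul_le_mul_of_nonneg_left h (by linarith)
      _ = phi b := by field_simp

lemma tendsto_sq_mul_Phi_neg : Tendsto (fun b => b ^ 2 * Phi (-b)) atTop (𝓝 0) := by
  apply tendsto_of_tendsto_of_tendsto_of_le_of_le' tendsto_const_nhds tendsto_mul_phi_atTop
  · filter_upwards [eventually_ge_atTop (0:ℝ)] with b hb
    exact mul_nonneg (by positivity) (Phi_pos (-b)).le
  · filter_upwards [eventually_ge_atTop (1:ℝ)] with b hb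
    have h := Phi_neg_le b (by linarith)
    calc b ^ 2 * Phi (-b) ≤ b ^ 2 * (phi b / b) :=
          mul_le_mul_of_nonneg_left h (by positivity)
      _ = b * phi b := by field_simp

lemma pos_of_deriv_neg {g g' : ℝ → ℝ} (hd : ∀ x, HasDerivAt g (g' x) x)
    (hneg : ∀ x, 0 < x → g' x < 0) (hlim : Tendsto g atTop (𝓝 0)) :
    ∀ b, 0 ≤ b → 0 < g b := by
  intro b hb
  have hanti : StrictAntiOn g (Set.Ici b) := by
    apply strictAntiOn_of_deriv_neg (convex_Ici b)
      (fun x _ => (hd x).differentiableAt.continuousAt.continuousWithinAt)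
    intro x hx
    rw [interior_Ici] at hx
    rw [(hd x).deriv]
    exact hneg x (lt_of_le_of_lt hb hx)
  have h1 : 0 ≤ g (b + 1) := by
    apply le_of_tendsto hlim
    filter_upwards [eventually_ge_atTop (b + 2)] with x hx
    exact le_of_lt (hanti (by simp : b + 1 ∈ Set.Ici b)
      (by simp only [Set.mem_Ici]; linarith) (by linarith))
  have h2 : g (b + 1) < g b :=
    hanti (by simp : b ∈ Set.Ici b) (by simp : b + 1 ∈ Set.Ici b) (by linarith)
  linarith

lemma h_pos : ∀ b, 0 ≤ b → 0 < phi b - b * Phi (-b) := by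
  apply pos_of_deriv_neg (g' := fun x => -Phi (-x))
  · intro x
    have hd := (hasDerivAt_phi x).sub ((hasDerivAt_id x).mul (hasDerivAt_Phi_neg x))
    refine hd.congr_deriv ?_
    simp
  · intro x _
    simpa using Phi_pos (-x)
  · simpa using tendsto_phi_atTop.sub tendsto_mul_Phi_neg

lemma k_pos : ∀ b, 0 ≤ b → 0 < (b ^ 2 + 1) * Phi (-b) - b * phi b := by
  apply pos_of_deriv_neg (g' := fun x => -2 * (phi x - x * Phi (-x)))
  · intro x
    have hd := (((hasDerivAt_pow 2 x).add_const 1).mul (hasDerivAt_Phi_neg x)).sub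
      ((hasDerivAt_id x).mul (hasDerivAt_phi x))
    refine hd.congr_deriv ?_
    simp; ring
  · intro x hx
    have := h_pos x hx.le
    linarith
  · have := (tendsto_sq_mul_Phi_neg.add tendsto_Phi_neg).sub tendsto_mul_phi_atTop
    simp only [add_zero, sub_zero] at this
    apply this.congr
    intro x; ring

lemma m_pos : ∀ b, 0 ≤ b → 0 < Phi (-b) * (b * phi b + Phi (-b)) - phi b ^ 2 := by
  apply pos_of_deriv_neg
    (g' := fun x => -(phi x) * ((x ^ 2 + 1) * Phi (-x) - x * phi x))
  · intro x
    have hd := ((hasDerivAt_Phi_neg x).mul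
      (((hasDerivAt_id x).mul (hasDerivAt_phi x)).add (hasDerivAt_Phi_neg x))).sub
      ((hasDerivAt_phi x).pow 2)
    refine hd.congr_deriv ?_
    simp; ring
  · intro x hx
    have := k_pos x hx.le
    have := phi_pos x
    nlinarith
  · have := (tendsto_Phi_neg.mul (tendsto_mul_phi_atTop.add tendsto_Phi_neg)).sub
      (tendsto_phi_atTop.pow 2)
    simpa using this

/-- Mills-type ratio. -/
noncomputable def r (b : ℝ) : ℝ := phi b / Phi (-b)

/-- The deficit transformation `F`. -/
noncomputable def F (b : ℝ) : ℝ := phi b / Phi (-b) - b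

lemma F_pos (b : ℝ) (hb : 0 ≤ b) : 0 < F b := by
  rw [F, sub_pos, lt_div_iff₀ (Phi_pos (-b))]
  have := h_pos b hb
  linarith

lemma F_lt (b : ℝ) (hb : 0 < b) : F b < 1 / b := by
  have hk := k_pos b hb.le
  rw [F, sub_lt_iff_lt_add, div_lt_iff₀ (Phi_pos (-b))]
  have heq : (1 / b + b) = (b ^ 2 + 1) / b := by
    field_simp
    ring
  rw [heq, div_mul_eq_mul_div, lt_div_iff₀ hb]
  nlinarith

lemma hasDerivAt_F (x : ℝ) :
    HasDerivAt F (-(Phi (-x) * (x * phi x + Phi (-x)) - phi x ^ 2) / Phi (-x) ^ 2) x := by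
  have hd := ((hasDerivAt_phi x).div (hasDerivAt_Phi_neg x)
    (ne_of_gt (Phi_pos (-x)))).sub (hasDerivAt_id x)
  refine hd.congr_deriv ?_
  have h0 := (Phi_pos (-x)).ne'
  field_simp
  ring

lemma continuous_F : Continuous F := by
  have : Differentiable ℝ F := fun x => (hasDerivAt_F x).differentiableAt
  exact this.continuous

lemma F_strictAntiOn : StrictAntiOn F (Set.Ici 0) := by
  apply strictAntiOn_of_deriv_neg (convex_Ici 0) continuous_F.continuousOn
  intro x hx
  rw [interior_Ici] at hx
  rw [(hasDerivAt_F x).deriv]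
  apply div_neg_of_neg_of_pos
  · simpa using m_pos x hx.le
  · exact pow_pos (Phi_pos (-x)) 2

lemma F_zero : F 0 = 2 / Real.sqrt (2 * Real.pi) := by
  rw [F, neg_zero, Phi_zero, phi_zero]
  field_simp
  simp

/-- The restriction of `F` to `(0, ∞)` is a continuous bijection onto
`(0, 2/√(2π))`. -/
theorem F_continuous_bijection :
    ContinuousOn F (Set.Ioi 0) ∧
      Set.BijOn F (Set.Ioi 0) (Set.Ioo 0 (2 / Real.sqrt (2 * Real.pi))) := by
  refine ⟨continuous_F.continuousOn, ?_, ?_, ?_⟩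
  · intro b hb
    rw [Set.mem_Ioi] at hb
    refine ⟨F_pos b hb.le, ?_⟩
    rw [← F_zero]
    exact F_strictAntiOn Set.self_mem_Ici (le_of_lt hb) hb
  · exact F_strictAntiOn.injOn.mono Set.Ioi_subset_Ici_self
  · intro y hy
    obtain ⟨hy0, hy1⟩ := hy
    set B := max 1 (2 / y) with hB
    have hB1 : (1:ℝ) ≤ B := le_max_left _ _
    have hB0 : (0:ℝ) < B := by linarith
    have hFB : F B < y := by
      have h1 : F B < 1 / B := F_lt B hB0
      have h2 : 1 / B ≤ y / 2 := by
        rw [div_le_div_iff₀ hB0 two_pos]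
        have : 2 / y ≤ B := le_max_right _ _
        rw [div_le_iff₀ hy0] at this
        linarith
      linarith
    have hmem : y ∈ Set.Ioo (F B) (F 0) := ⟨hFB, by rw [F_zero]; exact hy1⟩
    have := intermediate_value_Ioo' (le_of_lt hB0) continuous_F.continuousOn hmem
    obtain ⟨x, hx, hfx⟩ := this
    exact ⟨x, hx.1, hfx⟩
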